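/- Let (X,d) be a separable metric space such that the action (Iso(X),X) is Cauchy-indivisible. Then the Ellis semigroup E is a group if and only if X_l = X_p. -/
import Mathlib


open Filter Topology Set UniformSpace

noncomputable section

/-- The topology of pointwise convergence on the group of surjective isometries of `X`. -/
instance isoPointwiseTopology (X : Type*) [MetricSpace X] : TopologicalSpace (X ≃ᵢ X) :=
  TopologicalSpace.induced (fun g => (g : X → X)) Pi.topologicalSpace

/-- A net `g` diverges (`g_i → ∞`), i.e. it has no convergent subnet; equivalently,
no cluster point. -/
def DivergentNet {G : Type*} [TopologicalSpace G] {ι : Type*} [Preorder ι]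
    (g : ι → G) : Prop :=
  ∀ h : G, ¬ MapClusterPt h atTop g

/-- A sequence `g` diverges (`g_n → ∞`), i.e. it has no convergent subsequence. -/
def DivergentSeq {G : Type*} [TopologicalSpace G] (g : ℕ → G) : Prop :=
  ∀ φ : ℕ → ℕ, StrictMono φ → ∀ h : G, ¬ Tendsto (g ∘ φ) atTop (𝓝 h)

/-- The natural evaluation action of `Iso(X)` on `X` is Cauchy-indivisible: whenever a
net `g` in `Iso(X)` has no convergent subnet and `(g_i x)` is a Cauchy net for some
`x`, then `(g_i y)` is a Cauchy net for every `y`. -/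
def IsoCauchyIndivisible (X : Type*) [MetricSpace X] : Prop :=
  ∀ (ι : Type*) [Nonempty ι] [Preorder ι] [IsDirected ι (· ≤ ·)],
    ∀ g : ι → X ≃ᵢ X, DivergentNet g →
      (∃ x : X, Cauchy (map (fun i => g i x) atTop)) →
      ∀ y : X, Cauchy (map (fun i => g i y) atTop)

/-- Properness of the isometric evaluation action, expressed through emptiness of all
limit sets `L(x)`: no net in `Iso(X)` without convergent subnet has `(g_i x)`
converging in `X`. -/
def IsoProperLimits (X : Type*) [MetricSpace X] : Prop :=
  ∀ (ι : Type*) [Nonempty ι] [Preorder ι] [IsDirected ι (· ≤ ·)],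
    ∀ g : ι → X ≃ᵢ X, DivergentNet g →
      ∀ x y : X, ¬ Tendsto (fun i => g i x) atTop (𝓝 y)

/-- The canonical lift `ĝ` of an isometry of `X` to the completion `X̂`. -/
def hatIso {X : Type*} [MetricSpace X] (g : X ≃ᵢ X) : Completion X → Completion X :=
  Completion.map (g : X → X)

/-- The lifted group `{ĝ : g ∈ Iso(X)}` inside the selfmaps of `X̂`. -/
def hatIsoSet (X : Type*) [MetricSpace X] : Set (Completion X → Completion X) :=
  Set.range (hatIso (X := X))

/-- The Ellis semigroup `E`: the closure of the lifted group `{ĝ}` in the topology of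
pointwise convergence on selfmaps of `X̂`. -/
def Ellis (X : Type*) [MetricSpace X] : Set (Completion X → Completion X) :=
  closure (hatIsoSet X)

/-- The set `H` of pointwise limits on `X̂` of divergent sequences of lifted isometries. -/
def Hset (X : Type*) [MetricSpace X] : Set (Completion X → Completion X) :=
  { h | Continuous h ∧ ∃ g : ℕ → X ≃ᵢ X, DivergentSeq g ∧
      Tendsto (fun n => hatIso (g n)) atTop (𝓝 h) }

/-- The set `X_l ⊆ X̂` of limit points of the action `(Iso(X), X)` in the completion. -/
def Xl (X : Type*) [MetricSpace X] : Set (Completion X) :=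
  { y | ∃ (g : ℕ → X ≃ᵢ X) (x : X), DivergentSeq g ∧
      CauchySeq (fun n => g n x) ∧
      Tendsto (fun n => ((g n x : X) : Completion X)) atTop (𝓝 y) }

/-- The set `X_p ⊆ X̂` of special limit points of the action `(Iso(X), X)`. -/
def Xp (X : Type*) [MetricSpace X] : Set (Completion X) :=
  { y | ∃ (g : ℕ → X ≃ᵢ X) (x : X), DivergentSeq g ∧
      CauchySeq (fun n => g n x) ∧ CauchySeq (fun n => (g n).symm x) ∧
      Tendsto (fun n => ((g n x : X) : Completion X)) atTop (𝓝 y) }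

/-- `X ∪ X_l`, with `X` identified with its image in the completion `X̂`. -/
def XcupXl (X : Type*) [MetricSpace X] : Set (Completion X) :=
  Set.range ((↑) : X → Completion X) ∪ Xl X

/-- `X ∪ X_p`, with `X` identified with its image in the completion `X̂`. -/
def XcupXp (X : Type*) [MetricSpace X] : Set (Completion X) :=
  Set.range ((↑) : X → Completion X) ∪ Xp X

/-- The Ellis semigroup is a group: every element has a two-sided inverse in `E`
(under composition). -/
def EllisIsGroup (X : Type*) [MetricSpace X] : Prop :=
  ∀ f ∈ Ellis X, ∃ g ∈ Ellis X, f ∘ g = id ∧ g ∘ f = id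

/-! ### Auxiliary lemmas -/

namespace EllisAux

variable {X : Type*} [MetricSpace X]

lemma isometry_hatIso (g : X ≃ᵢ X) : Isometry (hatIso g) := g.isometry.completion_map

lemma hatIso_coe (g : X ≃ᵢ X) (x : X) : hatIso g (x : Completion X) = (g x : Completion X) :=
  Completion.map_coe g.isometry.uniformContinuous x

lemma hatIso_symm_comp (g : X ≃ᵢ X) : hatIso g.symm ∘ hatIso g = id := by
  have h := Completion.map_comp g.symm.isometry.uniformContinuous g.isometry.uniformContinuous
  rw [hatIso, hatIso, h]
  have h2 : (⇑g.symm ∘ ⇑g) = (id : X → X) := by funext x; simp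
  rw [h2, Completion.map_id]

lemma hatIso_comp_symm (g : X ≃ᵢ X) : hatIso g ∘ hatIso g.symm = id := by
  have := hatIso_symm_comp g.symm
  rwa [IsometryEquiv.symm_symm] at this

lemma isoTendsto_iff {ι : Type*} {l : Filter ι} {u : ι → X ≃ᵢ X} {h : X ≃ᵢ X} :
    Tendsto u l (𝓝 h) ↔ ∀ x, Tendsto (fun i => u i x) l (𝓝 (h x)) := by
  have hind : IsInducing (fun g : X ≃ᵢ X => (g : X → X)) := ⟨rfl⟩
  rw [hind.tendsto_nhds_iff, tendsto_pi_nhds]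
  exact Iff.rfl

lemma tendsto_of_dense {α β : Type*} [PseudoMetricSpace α] [PseudoMetricSpace β]
    {u : ℕ → α → β} {f : α → β} (hu : ∀ n, Isometry (u n)) (hf : Isometry f)
    {s : Set α} (hs : Dense s) (h : ∀ x ∈ s, Tendsto (fun n => u n x) atTop (𝓝 (f x)))
    (x : α) : Tendsto (fun n => u n x) atTop (𝓝 (f x)) := by
  rw [Metric.tendsto_atTop]
  intro ε hε
  obtain ⟨q, hq, hdq⟩ := hs.exists_dist_lt x (show (0:ℝ) < ε/3 by linarith)
  obtain ⟨N, hN⟩ := Metric.tendsto_atTop.1 (h q hq) (ε/3) (by linarith)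
  refine ⟨N, fun n hn => ?_⟩
  have h1 : dist (u n x) (f x) ≤ dist (u n x) (u n q) + dist (u n q) (f q) + dist (f q) (f x) :=
    dist_triangle4 _ _ _ _
  rw [(hu n).dist_eq, hf.dist_eq] at h1
  have h2 := hN n hn
  calc dist (u n x) (f x) ≤ dist x q + dist (u n q) (f q) + dist q x := h1
    _ < ε/3 + ε/3 + ε/3 := by rw [dist_comm q x]; linarith
    _ = ε := by ring

lemma cauchySeq_of_dense {α β : Type*} [PseudoMetricSpace α] [PseudoMetricSpace β]
    {u : ℕ → α → β} (hu : ∀ n, Isometry (u n)) {s : Set α} (hs : Dense s)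
    (h : ∀ x ∈ s, CauchySeq (fun n => u n x)) (x : α) : CauchySeq (fun n => u n x) := by
  rw [Metric.cauchySeq_iff]
  intro ε hε
  obtain ⟨q, hq, hdq⟩ := hs.exists_dist_lt x (show (0:ℝ) < ε/3 by linarith)
  obtain ⟨N, hN⟩ := Metric.cauchySeq_iff.1 (h q hq) (ε/3) (by linarith)
  refine ⟨N, fun m hm n hn => ?_⟩
  have h1 : dist (u m x) (u n x)
      ≤ dist (u m x) (u m q) + dist (u m q) (u n q) + dist (u n q) (u n x) :=
    dist_triangle4 _ _ _ _
  rw [(hu m).dist_eq, (hu n).dist_eq] at h1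
  have h2 := hN m hm n hn
  calc dist (u m x) (u n x) ≤ dist x q + dist (u m q) (u n q) + dist q x := h1
    _ < ε/3 + ε/3 + ε/3 := by rw [dist_comm q x]; linarith
    _ = ε := by ring

lemma cauchySeq_coe {u : ℕ → X} (h : CauchySeq u) :
    CauchySeq (fun n => (u n : Completion X)) := by
  rw [Metric.cauchySeq_iff] at h ⊢
  intro ε hε
  obtain ⟨N, hN⟩ := h ε hε
  exact ⟨N, fun m hm n hn => by rw [Completion.dist_eq]; exact hN m hm n hn⟩

lemma cauchySeq_of_coe_tendsto {u : ℕ → X} {b : Completion X}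
    (h : Tendsto (fun n => (u n : Completion X)) atTop (𝓝 b)) : CauchySeq u := by
  have hc : CauchySeq (fun n => (u n : Completion X)) := h.cauchySeq
  rw [Metric.cauchySeq_iff] at hc ⊢
  intro ε hε
  obtain ⟨N, hN⟩ := hc ε hε
  exact ⟨N, fun m hm n hn => by have := hN m hm n hn; rwa [Completion.dist_eq] at this⟩

lemma tendsto_apply_of_tendsto {v : ℕ → Completion X → Completion X} (hv : ∀ n, Isometry (v n))
    {c : ℕ → Completion X} {b B : Completion X} (hc : Tendsto c atTop (𝓝 b))
    (hB : Tendsto (fun n => v n b) atTop (𝓝 B)) :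
    Tendsto (fun n => v n (c n)) atTop (𝓝 B) := by
  rw [tendsto_iff_dist_tendsto_zero]
  have key : ∀ n, dist (v n (c n)) B ≤ dist (c n) b + dist (v n b) B := fun n => by
    calc dist (v n (c n)) B ≤ dist (v n (c n)) (v n b) + dist (v n b) B := dist_triangle _ _ _
      _ = dist (c n) b + dist (v n b) B := by rw [(hv n).dist_eq]
  refine squeeze_zero (fun n => dist_nonneg) key ?_
  have h1 := tendsto_iff_dist_tendsto_zero.1 hc
  have h2 := tendsto_iff_dist_tendsto_zero.1 hB
  simpa using h1.add h2

lemma exists_subseq_of_not_divergentSeq {G : Type*} [TopologicalSpace G] {g : ℕ → G}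
    (hg : ¬ DivergentSeq g) :
    ∃ φ : ℕ → ℕ, StrictMono φ ∧ ∃ h, Tendsto (g ∘ φ) atTop (𝓝 h) := by
  unfold DivergentSeq at hg
  push_neg at hg
  obtain ⟨φ, hφ, h, hh⟩ := hg
  exact ⟨φ, hφ, h, hh⟩

lemma divergentNet_of_divergentSeq [TopologicalSpace.SeparableSpace X]
    {g : ℕ → X ≃ᵢ X} (hg : DivergentSeq g) : DivergentNet g := by
  intro h hcl
  obtain ⟨s, hsc, hsd⟩ := TopologicalSpace.exists_countable_dense X
  haveI : Countable s := hsc.to_subtype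
  set r : (X ≃ᵢ X) → (s → X) := fun g d => g d with hr
  have hrc : Continuous r := by
    refine continuous_pi fun d => ?_
    exact (continuous_apply (d : X)).comp (IsInducing.continuous ⟨rfl⟩)
  have hcl2 : MapClusterPt (r h) atTop (r ∘ g) := by
    have ht : Tendsto r (map g atTop) (map (r ∘ g) atTop) := by
      rw [← Filter.map_map]; exact tendsto_map
    exact hcl.map hrc.continuousAt ht
  obtain ⟨ψ, hψ, hlim⟩ := TopologicalSpace.FirstCountableTopology.tendsto_subseq hcl2
  have hall : ∀ x : X, Tendsto (fun n => g (ψ n) x) atTop (𝓝 (h x)) := by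
    refine tendsto_of_dense (fun n => (g (ψ n)).isometry) h.isometry hsd ?_
    intro x hx
    exact tendsto_pi_nhds.1 hlim ⟨x, hx⟩
  exact hg ψ hψ h (isoTendsto_iff.2 hall)

lemma DivergentSeq.subseq {G : Type*} [TopologicalSpace G] {g : ℕ → G} (hg : DivergentSeq g)
    {φ : ℕ → ℕ} (hφ : StrictMono φ) : DivergentSeq (g ∘ φ) := by
  intro ψ hψ h ht
  exact hg (φ ∘ ψ) (hφ.comp hψ) h (by rwa [← Function.comp_assoc])

def uliftOrderIso : ULift ℕ ≃o ℕ := ⟨Equiv.ulift, Iff.rfl⟩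

lemma map_ulift_atTop {α : Type*} (u : ℕ → α) :
    map (fun i : ULift ℕ => u i.down) atTop = map u atTop := by
  have h : (fun i : ULift ℕ => u i.down) = u ∘ (uliftOrderIso : ULift ℕ → ℕ) := rfl
  rw [h, ← Filter.map_map, OrderIso.map_atTop]

lemma cauchySeq_of_CI [TopologicalSpace.SeparableSpace X] (hCI : IsoCauchyIndivisible X)
    {g : ℕ → X ≃ᵢ X} (hg : DivergentSeq g) {x : X} (hx : CauchySeq fun n => g n x) (y : X) :
    CauchySeq fun n => g n y := by
  haveI : IsDirected (ULift ℕ) (· ≤ ·) :=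
    ⟨fun a b => ⟨⟨a.down ⊔ b.down⟩, le_sup_left, le_sup_right⟩⟩
  have hdivnet := divergentNet_of_divergentSeq hg
  have hdiv : DivergentNet (fun i : ULift ℕ => g i.down) := by
    intro h hcl
    refine hdivnet h ?_
    unfold MapClusterPt at hcl ⊢
    rwa [map_ulift_atTop] at hcl
  have hxc : Cauchy (map (fun i : ULift ℕ => g i.down x) atTop) := by
    rw [map_ulift_atTop (fun n => g n x)]; exact hx
  have key := hCI (ULift ℕ) (fun i => g i.down) hdiv ⟨x, hxc⟩ y
  have h2 : Cauchy (map (fun n => g n y) atTop) := by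
    rw [← map_ulift_atTop (fun n => g n y)]; exact key
  exact h2

lemma ellis_isometry {f : Completion X → Completion X} (hf : f ∈ Ellis X) : Isometry f := by
  have hclosed : IsClosed {F : Completion X → Completion X | Isometry F} := by
    have heq : {F : Completion X → Completion X | Isometry F} =
        ⋂ (a : Completion X), ⋂ (b : Completion X),
          {F : Completion X → Completion X | edist (F a) (F b) = edist a b} := by
      ext F
      simp only [Set.mem_setOf_eq, Set.mem_iInter]
      exact ⟨fun h a b => h a b, fun h a b => h a b⟩
    rw [heq]
    refine isClosed_iInter fun a => isClosed_iInter fun b => isClosed_eq ?_ continuous_const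
    exact (continuous_apply a).edist (continuous_apply b)
  have hsub : hatIsoSet X ⊆ {F : Completion X → Completion X | Isometry F} := by
    rintro F ⟨g, rfl⟩; exact isometry_hatIso g
  exact (hclosed.closure_subset_iff.mpr hsub) hf

lemma exists_ellis_limit [Nonempty X] [TopologicalSpace.SeparableSpace X]
    (hCI : IsoCauchyIndivisible X)
    {g : ℕ → X ≃ᵢ X} (hg : DivergentSeq g) {x : X} (hx : CauchySeq (fun n => g n x)) :
    ∃ f ∈ Ellis X, ∀ p, Tendsto (fun n => hatIso (g n) p) atTop (𝓝 (f p)) := by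
  have hall : ∀ y : X, CauchySeq (fun n => g n y) := fun y => cauchySeq_of_CI hCI hg hx y
  have hcoe : ∀ p : Completion X, CauchySeq (fun n => hatIso (g n) p) := by
    refine cauchySeq_of_dense (fun n => isometry_hatIso (g n)) Completion.denseRange_coe ?_
    rintro p ⟨z, rfl⟩
    have : CauchySeq (fun n => ((g n z : X) : Completion X)) := cauchySeq_coe (hall z)
    simpa only [hatIso_coe] using this
  choose F hF using fun p => cauchySeq_tendsto_of_complete (hcoe p)
  refine ⟨F, ?_, hF⟩
  exact mem_closure_of_tendsto (tendsto_pi_nhds.mpr hF)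
    (Eventually.of_forall fun n => ⟨g n, rfl⟩)

lemma hatIso_tendsto {u : ℕ → X ≃ᵢ X} {h : X ≃ᵢ X} (hu : Tendsto u atTop (𝓝 h))
    (p : Completion X) : Tendsto (fun n => hatIso (u n) p) atTop (𝓝 (hatIso h p)) := by
  refine tendsto_of_dense (fun n => isometry_hatIso (u n)) (isometry_hatIso h)
    Completion.denseRange_coe ?_ p
  rintro q ⟨z, rfl⟩
  simp only [hatIso_coe]
  exact ((Completion.continuous_coe X).tendsto (h z)).comp (isoTendsto_iff.1 hu z)

lemma ellis_rep [TopologicalSpace.SeparableSpace X] {f : Completion X → Completion X}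
    (hf : f ∈ Ellis X) :
    (∃ g : X ≃ᵢ X, f = hatIso g) ∨
    ∃ g : ℕ → X ≃ᵢ X, DivergentSeq g ∧
      ∀ p, Tendsto (fun n => hatIso (g n) p) atTop (𝓝 (f p)) := by
  haveI : TopologicalSpace.SeparableSpace (Completion X) :=
    Completion.denseRange_coe.separableSpace (Completion.continuous_coe X)
  obtain ⟨s, hsc, hsd⟩ := TopologicalSpace.exists_countable_dense (Completion X)
  haveI : Countable s := hsc.to_subtype
  set r : (Completion X → Completion X) → (s → Completion X) := fun F d => F d with hrdef
  have hrc : Continuous r := continuous_pi fun d => continuous_apply (d : Completion X)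
  have hmem : r f ∈ closure (r '' hatIsoSet X) :=
    image_closure_subset_closure_image hrc ⟨f, hf, rfl⟩
  obtain ⟨v, hv_mem, hv_t⟩ := mem_closure_iff_seq_limit.1 hmem
  have hex : ∀ n, ∃ g : X ≃ᵢ X, r (hatIso g) = v n := by
    intro n
    obtain ⟨F, ⟨g, rfl⟩, hFr⟩ := hv_mem n
    exact ⟨g, hFr⟩
  choose g hg using hex
  have hpt : ∀ p, Tendsto (fun n => hatIso (g n) p) atTop (𝓝 (f p)) := by
    refine tendsto_of_dense (fun n => isometry_hatIso (g n)) (ellis_isometry hf) hsd ?_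
    intro p hp
    have := tendsto_pi_nhds.1 hv_t ⟨p, hp⟩
    simpa only [← hg] using this
  by_cases hdiv : DivergentSeq g
  · exact Or.inr ⟨g, hdiv, hpt⟩
  · obtain ⟨φ, hφ, h, hth⟩ := exists_subseq_of_not_divergentSeq hdiv
    refine Or.inl ⟨h, funext fun p => ?_⟩
    have h1 : Tendsto (fun n => hatIso (g (φ n)) p) atTop (𝓝 (f p)) :=
      (hpt p).comp hφ.tendsto_atTop
    have h2 : Tendsto (fun n => hatIso (g (φ n)) p) atTop (𝓝 (hatIso h p)) :=
      hatIso_tendsto hth p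
    exact tendsto_nhds_unique h1 h2

lemma ellis_surjective [Nonempty X] [TopologicalSpace.SeparableSpace X]
    (hCI : IsoCauchyIndivisible X) (hXlp : Xl X ⊆ Xp X)
    {g : ℕ → X ≃ᵢ X} (hg : DivergentSeq g) {f : Completion X → Completion X}
    (hfp : ∀ p, Tendsto (fun n => hatIso (g n) p) atTop (𝓝 (f p)))
    (hfI : Isometry f) : Function.Surjective f := by
  have hclosed : IsClosed (Set.range f) := hfI.isClosedEmbedding.isClosed_range
  have hdense : ∀ x : X, (x : Completion X) ∈ Set.range f := by
    intro x
    have h1 : Tendsto (fun n => ((g n x : X) : Completion X)) atTop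
        (𝓝 (f (x : Completion X))) := by
      have := hfp (x : Completion X)
      simpa only [hatIso_coe] using this
    have hcx : CauchySeq (fun n => g n x) := cauchySeq_of_coe_tendsto h1
    have hyXl : f (x : Completion X) ∈ Xl X := ⟨g, x, hg, hcx, h1⟩
    obtain ⟨h, z, hhdiv, hhz, hhz', hhy⟩ := hXlp hyXl
    set w : ℕ → X ≃ᵢ X := fun n => (h n).trans (g n).symm with hwdef
    have hwz : ∀ n, w n z = (g n).symm (h n z) := fun n => rfl
    have hwx : ∀ n, w n ((h n).symm x) = (g n).symm x := by
      intro n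
      simp [hwdef, IsometryEquiv.trans_apply, IsometryEquiv.apply_symm_apply]
    have hwzx : Tendsto (fun n => w n z) atTop (𝓝 x) := by
      rw [tendsto_iff_dist_tendsto_zero]
      have hdd : ∀ n, dist (w n z) x
          = dist ((h n z : X) : Completion X) ((g n x : X) : Completion X) := by
        intro n
        rw [Completion.dist_eq]
        calc dist (w n z) x = dist (g n (w n z)) (g n x) := ((g n).isometry.dist_eq _ _).symm
          _ = dist (h n z) (g n x) := by rw [hwz n, IsometryEquiv.apply_symm_apply]
      have hlim := hhy.dist h1
      rw [dist_self] at hlim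
      simp only [hdd]
      exact hlim
    have main : ∃ φ : ℕ → ℕ, StrictMono φ ∧ ∃ b : Completion X,
        Tendsto (fun n => ((((g (φ n)).symm x : X)) : Completion X)) atTop (𝓝 b) := by
      by_cases hwdiv : DivergentSeq w
      · obtain ⟨W, _, hWp⟩ := exists_ellis_limit hCI hwdiv hwzx.cauchySeq
        by_cases hhidiv : DivergentSeq (fun n => (h n).symm)
        · have hhix : CauchySeq (fun n => (h n).symm x) := cauchySeq_of_CI hCI hhidiv hhz' x
          obtain ⟨b0, hb0⟩ := cauchySeq_tendsto_of_complete (cauchySeq_coe hhix)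
          refine ⟨id, strictMono_id, W b0, ?_⟩
          have hthis := tendsto_apply_of_tendsto (fun n => isometry_hatIso (w n)) hb0 (hWp b0)
          exact hthis.congr fun n => by rw [hatIso_coe, hwx]; rfl
        · obtain ⟨ψ, hψ, u, hu⟩ := exists_subseq_of_not_divergentSeq hhidiv
          refine ⟨ψ, hψ, W ((u x : X) : Completion X), ?_⟩
          have hc : Tendsto (fun n => (((h (ψ n)).symm x : X) : Completion X)) atTop
              (𝓝 ((u x : X) : Completion X)) :=
            ((Completion.continuous_coe X).tendsto (u x)).comp (isoTendsto_iff.1 hu x)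
          have hB : Tendsto (fun n => hatIso (w (ψ n)) ((u x : X) : Completion X)) atTop
              (𝓝 (W ((u x : X) : Completion X))) := (hWp _).comp hψ.tendsto_atTop
          have := tendsto_apply_of_tendsto (fun n => isometry_hatIso (w (ψ n))) hc hB
          exact this.congr fun n => by rw [hatIso_coe, hwx]
      · obtain ⟨φ, hφ, wbar, hwt⟩ := exists_subseq_of_not_divergentSeq hwdiv
        by_cases hdiv2 : DivergentSeq (fun n => (h (φ n)).symm)
        · have hz2 : CauchySeq (fun n => (h (φ n)).symm z) :=
            hhz'.comp_tendsto hφ.tendsto_atTop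
          have hhix : CauchySeq (fun n => (h (φ n)).symm x) := cauchySeq_of_CI hCI hdiv2 hz2 x
          obtain ⟨b0, hb0⟩ := cauchySeq_tendsto_of_complete (cauchySeq_coe hhix)
          refine ⟨φ, hφ, hatIso wbar b0, ?_⟩
          have hB : Tendsto (fun n => hatIso (w (φ n)) b0) atTop (𝓝 (hatIso wbar b0)) :=
            hatIso_tendsto hwt b0
          have := tendsto_apply_of_tendsto (fun n => isometry_hatIso (w (φ n))) hb0 hB
          exact this.congr fun n => by rw [hatIso_coe, hwx]
        · obtain ⟨ψ, hψ, u, hu⟩ := exists_subseq_of_not_divergentSeq hdiv2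
          refine ⟨φ ∘ ψ, hφ.comp hψ, hatIso wbar ((u x : X) : Completion X), ?_⟩
          have hc : Tendsto (fun n => (((h (φ (ψ n))).symm x : X) : Completion X)) atTop
              (𝓝 ((u x : X) : Completion X)) :=
            ((Completion.continuous_coe X).tendsto (u x)).comp (isoTendsto_iff.1 hu x)
          have hwt2 : Tendsto (fun n => w (φ (ψ n))) atTop (𝓝 wbar) :=
            hwt.comp hψ.tendsto_atTop
          have hB := hatIso_tendsto hwt2 ((u x : X) : Completion X)
          have hthis := tendsto_apply_of_tendsto (fun n => isometry_hatIso (w (φ (ψ n)))) hc hB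
          exact hthis.congr fun n => by rw [hatIso_coe, hwx]; rfl
    obtain ⟨φ, hφ, b, hb⟩ := main
    refine ⟨b, ?_⟩
    have hA : Tendsto (fun n => dist ((((g (φ n)).symm x : X) : Completion X)) b
        + dist (hatIso (g (φ n)) b) (f b)) atTop (𝓝 0) := by
      have t1 := tendsto_iff_dist_tendsto_zero.1 hb
      have t2 := tendsto_iff_dist_tendsto_zero.1 ((hfp b).comp hφ.tendsto_atTop)
      simpa using t1.add t2
    have hle : dist ((x : Completion X)) (f b) ≤ 0 := by
      refine ge_of_tendsto hA (Eventually.of_forall fun n => ?_)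
      have e1 : ((x : Completion X))
          = hatIso (g (φ n)) ((((g (φ n)).symm x : X)) : Completion X) := by
        rw [hatIso_coe, IsometryEquiv.apply_symm_apply]
      calc dist ((x : Completion X)) (f b)
          ≤ dist ((x : Completion X)) (hatIso (g (φ n)) b)
            + dist (hatIso (g (φ n)) b) (f b) := dist_triangle _ _ _
        _ = dist ((((g (φ n)).symm x : X)) : Completion X) b
            + dist (hatIso (g (φ n)) b) (f b) := by
            rw [e1, (isometry_hatIso (g (φ n))).dist_eq]
    have hzero : dist ((x : Completion X)) (f b) = 0 := le_antisymm hle dist_nonneg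
    exact (dist_eq_zero.1 hzero).symm
  intro p
  have hd : Dense (Set.range f) := by
    have hsub : Set.range ((↑) : X → Completion X) ⊆ Set.range f := by
      rintro q ⟨x, rfl⟩; exact hdense x
    exact Dense.mono hsub Completion.denseRange_coe
  have : p ∈ Set.range f := by rw [← hclosed.closure_eq]; exact hd p
  exact this

lemma inv_mem_ellis [Nonempty X] {g : ℕ → X ≃ᵢ X} {f : Completion X → Completion X}
    (hfp : ∀ p, Tendsto (fun n => hatIso (g n) p) atTop (𝓝 (f p)))
    (hsurj : Function.Surjective f) (hinj : Function.Injective f) :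
    ∃ F ∈ Ellis X, f ∘ F = id ∧ F ∘ f = id := by
  classical
  haveI : Nonempty (Completion X) := ⟨((Classical.arbitrary X : X) : Completion X)⟩
  set F := Function.invFun f with hFdef
  have hright : Function.RightInverse F f := Function.rightInverse_invFun hsurj
  have hleft : Function.LeftInverse F f := Function.leftInverse_invFun hinj
  have hFt : ∀ p, Tendsto (fun n => hatIso ((g n).symm) p) atTop (𝓝 (F p)) := by
    intro p
    rw [tendsto_iff_dist_tendsto_zero]
    have hkey : ∀ n, dist (hatIso (g n).symm p) (F p) = dist p (hatIso (g n) (F p)) := by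
      intro n
      calc dist (hatIso (g n).symm p) (F p)
          = dist (hatIso (g n) (hatIso (g n).symm p)) (hatIso (g n) (F p)) :=
            ((isometry_hatIso (g n)).dist_eq _ _).symm
        _ = dist p (hatIso (g n) (F p)) := by
            rw [show hatIso (g n) (hatIso (g n).symm p) = p from
              congrFun (hatIso_comp_symm (g n)) p]
    have h2 : Tendsto (fun n => dist p (hatIso (g n) (F p))) atTop
        (𝓝 (dist p (f (F p)))) := tendsto_const_nhds.dist (hfp (F p))
    rw [hright p, dist_self] at h2
    simpa only [hkey] using h2
  refine ⟨F, ?_, funext fun p => hright p, funext fun p => hleft p⟩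
  exact mem_closure_of_tendsto (tendsto_pi_nhds.2 hFt)
    (Eventually.of_forall fun n => ⟨(g n).symm, rfl⟩)

end EllisAux

open EllisAux in
/-- Proposition 5.10: the Ellis semigroup `E` is a group iff `X_l = X_p`. -/
theorem ellisIsGroup_iff_Xl_eq_Xp (X : Type*) [MetricSpace X]
    [TopologicalSpace.SeparableSpace X] (hCI : IsoCauchyIndivisible X) :
    EllisIsGroup X ↔ Xl X = Xp X := by
  classical
  rcases isEmpty_or_nonempty X with hX | hX
  · -- trivial case: `X` empty
    have hXl : Xl X = ∅ := by
      ext y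
      simp only [Xl, Set.mem_setOf_eq, Set.mem_empty_iff_false, iff_false, not_exists]
      intro g x
      exact fun _ => isEmptyElim x
    have hXp : Xp X = ∅ := by
      ext y
      simp only [Xp, Set.mem_setOf_eq, Set.mem_empty_iff_false, iff_false, not_exists]
      intro g x
      exact fun _ => isEmptyElim x
    have hset : hatIsoSet X = {id} := by
      apply Set.Subset.antisymm
      · rintro F ⟨g, rfl⟩
        have hgid : (g : X → X) = id := funext fun x => (IsEmpty.false x).elim
        simp only [Set.mem_singleton_iff, hatIso, hgid, Completion.map_id]
      · intro F hF
        rw [Set.mem_singleton_iff] at hF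
        subst hF
        refine ⟨IsometryEquiv.refl X, ?_⟩
        have : ((IsometryEquiv.refl X : X ≃ᵢ X) : X → X) = id := rfl
        simp only [hatIso, this, Completion.map_id]
    have hEllis : Ellis X = {id} := by
      rw [Ellis, hset, closure_singleton]
    constructor
    · intro _; rw [hXl, hXp]
    · intro _ f hf
      rw [hEllis, Set.mem_singleton_iff] at hf
      subst hf
      exact ⟨id, by rw [hEllis]; exact rfl, rfl, rfl⟩
  · constructor
    · intro hE
      apply Set.Subset.antisymm
      · rintro y ⟨g, x, hgdiv, hgx, hgy⟩
        obtain ⟨f, hfE, hfp⟩ := exists_ellis_limit hCI hgdiv hgx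
        obtain ⟨f', hf'E, hff', -⟩ := hE f hfE
        set q := f' (x : Completion X) with hq
        have hfq : f q = (x : Completion X) := congrFun hff' _
        have hcs : CauchySeq (fun n => (g n).symm x) := by
          rw [Metric.cauchySeq_iff]
          intro ε hε
          obtain ⟨N, hN⟩ := Metric.tendsto_atTop.1 (hfp q) (ε/2) (by linarith)
          refine ⟨N, fun m hm n hn => ?_⟩
          have key : ∀ k, dist (hatIso (g k).symm ((x : Completion X))) q
              = dist (hatIso (g k) q) (f q) := by
            intro k
            calc dist (hatIso (g k).symm ((x : Completion X))) q
                = dist (hatIso (g k) (hatIso (g k).symm ((x : Completion X))))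
                    (hatIso (g k) q) := ((isometry_hatIso (g k)).dist_eq _ _).symm
              _ = dist ((x : Completion X)) (hatIso (g k) q) := by
                  rw [show hatIso (g k) (hatIso (g k).symm ((x : Completion X)))
                    = (x : Completion X) from congrFun (hatIso_comp_symm (g k)) _]
              _ = dist (hatIso (g k) q) (f q) := by rw [← hfq, dist_comm]
          have hdd : dist ((g m).symm x) ((g n).symm x)
              = dist (hatIso (g m).symm ((x : Completion X)))
                  (hatIso (g n).symm ((x : Completion X))) := by
            rw [hatIso_coe, hatIso_coe, Completion.dist_eq]
          have htri : dist (hatIso (g m).symm ((x : Completion X)))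
              (hatIso (g n).symm ((x : Completion X)))
              ≤ dist (hatIso (g m).symm ((x : Completion X))) q
                + dist (hatIso (g n).symm ((x : Completion X))) q := dist_triangle_right _ _ _
          have h1 := hN m hm
          have h2 := hN n hn
          rw [key m] at htri
          rw [key n] at htri
          rw [hdd]
          linarith
        exact ⟨g, x, hgdiv, hgx, hcs, hgy⟩
      · rintro y ⟨g, x, h1, h2, -, h4⟩
        exact ⟨g, x, h1, h2, h4⟩
    · intro hXeq f hf
      rcases ellis_rep hf with ⟨g, rfl⟩ | ⟨g, hgdiv, hfp⟩
      · exact ⟨hatIso g.symm, subset_closure ⟨g.symm, rfl⟩,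
          hatIso_comp_symm g, hatIso_symm_comp g⟩
      · have hfI : Isometry f := ellis_isometry hf
        have hsurj := ellis_surjective hCI hXeq.subset hgdiv hfp hfI
        exact inv_mem_ellis hfp hsurj hfI.injective

end
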